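/- Let R_d > 0, C > 0, R_p ≥ 0, q0 be real constants, and set ω = 1/(2·R_d·C). Define Q(t) = q0·sin²(ωt) and define the outlet pressure p : ℝ → ℝ by p(t) = R_d·q0·[ (R_p/R_d + 1/2)·sin²(ωt) + (1/4)·(1 − exp(−2ωt) − sin(2ωt)) ]. Then p(t) = R_p·Q(t) + p_d(t) for all t, where p_d(t) = (R_d·q0/4)·(2 − cos(2ωt) − sin(2ωt) − exp(−2ωt)); consequently p is differentiable, p(0) = 0, and p satisfies the three-element Windkessel relation C·p'(t) + p(t)/R_d = (1 + R_p/R_d)·Q(t) + C·R_p·Q'(t) for all t ∈ ℝ. -/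

import Mathlib

/-- Three-element Windkessel model with `ω = 1/(2·R_d·C)` and inflow
`Q(t) = q0·sin²(ωt)`: the outlet pressure
`p(t) = R_d·q0·[(R_p/R_d + 1/2)·sin²(ωt) + (1/4)·(1 − exp(−2ωt) − sin(2ωt))]`
decomposes as `p = R_p·Q + p_d` with
`p_d(t) = (R_d·q0/4)·(2 − cos(2ωt) − sin(2ωt) − exp(−2ωt))`; consequently `p` is
differentiable, `p(0) = 0`, and `p` satisfies the three-element Windkessel relation
`C·p' + p/R_d = (1 + R_p/R_d)·Q + C·R_p·Q'`. -/
theorem windkessel_three_element_solution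
    (R_d C R_p q0 : ℝ) (hRd : 0 < R_d) (hC : 0 < C) (hRp : 0 ≤ R_p)
    (ω : ℝ) (hω : ω = 1 / (2 * R_d * C))
    (Q : ℝ → ℝ) (hQ : ∀ t, Q t = q0 * Real.sin (ω * t) ^ 2)
    (p_d : ℝ → ℝ)
    (hpd : ∀ t, p_d t = (R_d * q0 / 4) *
      (2 - Real.cos (2 * ω * t) - Real.sin (2 * ω * t) - Real.exp (-(2 * ω * t))))
    (p : ℝ → ℝ)
    (hp : ∀ t, p t = R_d * q0 *
      ((R_p / R_d + 1 / 2) * Real.sin (ω * t) ^ 2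
        + (1 / 4) * (1 - Real.exp (-(2 * ω * t)) - Real.sin (2 * ω * t)))) :
    (∀ t : ℝ, p t = R_p * Q t + p_d t) ∧
      Differentiable ℝ p ∧
      p 0 = 0 ∧
      (∀ t : ℝ, C * deriv p t + p t / R_d
        = (1 + R_p / R_d) * Q t + C * R_p * deriv Q t) := by
  have hRd' : R_d ≠ 0 := ne_of_gt hRd
  have hC' : C ≠ 0 := ne_of_gt hC
  -- basic derivative facts at an arbitrary point t
  have hlin : ∀ t : ℝ, HasDerivAt (fun s : ℝ => ω * s) ω t := by
    intro t
    simpa using (hasDerivAt_id t).const_mul ω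
  have hlin2 : ∀ t : ℝ, HasDerivAt (fun s : ℝ => 2 * ω * s) (2 * ω) t := by
    intro t
    simpa using (hasDerivAt_id t).const_mul (2 * ω)
  have hneg : ∀ t : ℝ, HasDerivAt (fun s : ℝ => -(2 * ω * s)) (-(2 * ω)) t := by
    intro t; exact (hlin2 t).neg
  have hsin : ∀ t : ℝ, HasDerivAt (fun s : ℝ => Real.sin (ω * s)) (Real.cos (ω * t) * ω) t := by
    intro t; exact (Real.hasDerivAt_sin (ω * t)).comp t (hlin t)
  have hsin2 : ∀ t : ℝ, HasDerivAt (fun s : ℝ => Real.sin (2 * ω * s))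
      (Real.cos (2 * ω * t) * (2 * ω)) t := by
    intro t; exact (Real.hasDerivAt_sin (2 * ω * t)).comp t (hlin2 t)
  have hexp : ∀ t : ℝ, HasDerivAt (fun s : ℝ => Real.exp (-(2 * ω * s)))
      (Real.exp (-(2 * ω * t)) * (-(2 * ω))) t := by
    intro t; exact (Real.hasDerivAt_exp (-(2 * ω * t))).comp t (hneg t)
  have hsq : ∀ t : ℝ, HasDerivAt (fun s : ℝ => Real.sin (ω * s) ^ 2)
      (2 * Real.sin (ω * t) * (Real.cos (ω * t) * ω)) t := by
    intro t
    have := (hsin t).fun_pow 2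
    simpa [mul_comm, mul_assoc, mul_left_comm] using this
  have hQfun : Q = fun s => q0 * Real.sin (ω * s) ^ 2 := funext hQ
  have hpfun : p = fun s => R_d * q0 *
      ((R_p / R_d + 1 / 2) * Real.sin (ω * s) ^ 2
        + (1 / 4) * (1 - Real.exp (-(2 * ω * s)) - Real.sin (2 * ω * s))) := funext hp
  have hQ' : ∀ t : ℝ, HasDerivAt Q (q0 * (2 * Real.sin (ω * t) * (Real.cos (ω * t) * ω))) t := by
    intro t
    rw [hQfun]
    exact (hsq t).const_mul q0
  have hP' : ∀ t : ℝ, HasDerivAt p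
      (R_d * q0 * ((R_p / R_d + 1 / 2) * (2 * Real.sin (ω * t) * (Real.cos (ω * t) * ω))
        + (1 / 4) * (0 - Real.exp (-(2 * ω * t)) * (-(2 * ω))
            - Real.cos (2 * ω * t) * (2 * ω)))) t := by
    intro t
    rw [hpfun]
    exact ((((hsq t).const_mul (R_p / R_d + 1 / 2)).add
      ((((hasDerivAt_const t (1:ℝ)).sub (hexp t)).sub (hsin2 t)).const_mul (1/4))).const_mul
      (R_d * q0))
  refine ⟨?_, ?_, ?_, ?_⟩
  · intro t
    rw [hp, hQ, hpd]
    have hcos : Real.cos (2 * ω * t) = 1 - 2 * Real.sin (ω * t) ^ 2 := by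
      rw [show (2 : ℝ) * ω * t = 2 * (ω * t) by ring, Real.cos_two_mul' ]
      have := Real.sin_sq_add_cos_sq (ω * t)
      ring_nf
      nlinarith [Real.sin_sq_add_cos_sq (ω * t)]
    rw [hcos]
    field_simp
    ring
  · intro t
    exact (hP' t).differentiableAt
  · rw [hp]; simp
  · intro t
    rw [(hP' t).deriv, (hQ' t).deriv, hp, hQ]
    have hωC : ω * C = 1 / (2 * R_d) := by rw [hω]; field_simp
    have hsin2' : Real.sin (2 * ω * t) = 2 * Real.sin (ω * t) * Real.cos (ω * t) := by
      rw [show (2 : ℝ) * ω * t = 2 * (ω * t) by ring, Real.sin_two_mul]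
    have hcos2' : Real.cos (2 * ω * t) = 1 - 2 * Real.sin (ω * t) ^ 2 := by
      rw [show (2 : ℝ) * ω * t = 2 * (ω * t) by ring, Real.cos_two_mul']
      nlinarith [Real.sin_sq_add_cos_sq (ω * t)]
    rw [hsin2', hcos2', hω]
    field_simp
    ring
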